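/- Let V be a finite-dimensional vector space over ℚ, let h ∈ GL(V), let A be a subring of End(V) all of whose elements commute with h, and let A[h] be the subring of End(V) generated by A and h. Let 0 = V_0 ⊆ V_1 ⊆ ⋯ ⊆ V_n = V be a filtration of V by A[h]-submodules, and for 1 ≤ i ≤ n let h_i be the automorphism induced by h on V_i/V_{i-1}. Then ht_A(h) ≥ ∏_{1 ≤ i ≤ n} ht_A(h_i). Moreover, if V is isomorphic to ⊕_{1 ≤ i ≤ n} V_i/V_{i-1} as an A[h]-module, then ht_A(h) = ∏_{1 ≤ i ≤ n} ht_A(h_i). -/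

import Mathlib

/-- A lattice in a `ℚ`-vector space `V`: a finitely generated additive subgroup
spanning `V` over `ℚ`. -/
def IsLatticeIn {V : Type*} [AddCommGroup V] [Module ℚ V] (Λ : AddSubgroup V) : Prop :=
  Λ.FG ∧ Submodule.span ℚ (Λ : Set V) = ⊤

/-- The `A`-height `ht_A(h)` (in `ℕ∞`, with `⊤` when no admissible pair exists): the
minimum of the indices `[Λ : E]` over all pairs of `A`-stable lattices `(Λ, E)` with
`E ⊆ Λ` and `h(E) ⊆ Λ`. -/
noncomputable def latHeightA {V : Type*} [AddCommGroup V] [Module ℚ V]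
    (A : Subring (Module.End ℚ V)) (h : Module.End ℚ V) : ℕ∞ :=
  sInf {n : ℕ∞ | ∃ Λ E : AddSubgroup V, IsLatticeIn Λ ∧ IsLatticeIn E ∧ E ≤ Λ ∧
    (∀ x ∈ E, h x ∈ Λ) ∧
    (∀ a ∈ A, ∀ x ∈ Λ, a x ∈ Λ) ∧ (∀ a ∈ A, ∀ x ∈ E, a x ∈ E) ∧
    n = (E.relIndex Λ : ℕ∞)}

/-- The endomorphism induced on the subquotient `q / p` (realized as
`q ⧸ (p.comap q.subtype)`) by an endomorphism `g` preserving `p` and `q`. -/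
noncomputable def inducedEnd {V : Type*} [AddCommGroup V] [Module ℚ V]
    (p q : Submodule ℚ V) (g : Module.End ℚ V)
    (hq : ∀ x ∈ q, g x ∈ q) (hp : ∀ x ∈ p, g x ∈ p) :
    Module.End ℚ ((↥q) ⧸ (p.comap q.subtype)) :=
  Submodule.mapQ (p.comap q.subtype) (p.comap q.subtype) (g.restrict hq)
    (by
      intro x hx
      simp only [Submodule.mem_comap, Submodule.coe_subtype] at hx ⊢
      simpa only [LinearMap.restrict_coe_apply] using hp _ hx)

/-! ### Auxiliary lemmas -/


section Aux1

variable {M N : Type*} [AddCommGroup M] [AddCommGroup N]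

private lemma toInt_map (f : M →+ N) (H : AddSubgroup M) :
    AddSubgroup.toIntSubmodule (H.map f) =
      (AddSubgroup.toIntSubmodule H).map f.toIntLinearMap := by
  ext x
  simp [AddSubgroup.mem_map, Submodule.mem_map]

private lemma fg_iff_int (H : AddSubgroup M) :
    H.FG ↔ (AddSubgroup.toIntSubmodule H).FG := by
  rw [Submodule.fg_iff_addSubgroup_fg, AddSubgroup.toIntSubmodule_toAddSubgroup]

private lemma fg_of_le {L P : Submodule ℤ M} (hL : L.FG) (h : P ≤ L) : P.FG := by
  haveI : Module.Finite ℤ ↥L := Module.Finite.iff_fg.mpr hL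
  have h2 : P = (P.comap L.subtype).map L.subtype := by
    rw [Submodule.map_comap_eq_self]; rwa [Submodule.range_subtype]
  rw [h2]
  exact (IsNoetherian.noetherian _).map _

private lemma addsubgroup_fg_map {H : AddSubgroup M} (h : H.FG) (f : M →+ N) :
    (H.map f).FG := by
  rw [fg_iff_int] at h ⊢
  rw [toInt_map]
  exact h.map _

private lemma fg_comap_of_injective (f : M →+ N) (hf : Function.Injective f)
    {H : AddSubgroup N} (h : H.FG) : (H.comap f).FG := by
  rw [fg_iff_int] at h ⊢
  apply Submodule.fg_of_fg_map_injective f.toIntLinearMap hf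
  rw [← toInt_map]
  apply fg_of_le h
  intro x hx
  obtain ⟨y, hy, rfl⟩ := hx
  exact hy

end Aux1

section Aux2

variable {V : Type*} [AddCommGroup V] [Module ℚ V]

private lemma exists_nsmul_mem (Λ : AddSubgroup V)
    (hs : Submodule.span ℚ (Λ : Set V) = ⊤) (x : V) :
    ∃ m : ℕ, 0 < m ∧ (m : ℚ) • x ∈ Λ := by
  have hx : x ∈ Submodule.span ℚ (Λ : Set V) := hs ▸ Submodule.mem_top
  rw [Submodule.mem_span_set] at hx
  obtain ⟨c, hc, rfl⟩ := hx
  refine ⟨∏ v ∈ c.support, (c v).den,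
    Finset.prod_pos (fun v _ => (c v).den_pos), ?_⟩
  rw [Finsupp.sum, Finset.smul_sum]
  apply AddSubgroup.sum_mem
  intro v hv
  obtain ⟨t, ht⟩ := Finset.dvd_prod_of_mem (fun v => (c v).den) hv
  set m : ℕ := ∏ v ∈ c.support, (c v).den with hm
  have hden : ((c v).den : ℚ) ≠ 0 := by
    exact_mod_cast (c v).den_pos.ne'
  have key : (m : ℚ) • (c v • v) = ((t : ℤ) * (c v).num) • v := by
    rw [smul_smul, ← Int.cast_smul_eq_zsmul ℚ]
    congr 1
    have h1 : (m : ℚ) = ((c v).den : ℚ) * (t : ℚ) := by exact_mod_cast ht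
    have h2 : ((c v).den : ℚ) * (c v) = ((c v).num : ℚ) := by
      rw [mul_comm, Rat.mul_den_eq_num]
    rw [h1]
    push_cast
    rw [← h2]
    ring
  rw [key]
  exact AddSubgroup.zsmul_mem _ (hc hv) _

private lemma span_comap_top (Λ : AddSubgroup V) (hs : Submodule.span ℚ (Λ : Set V) = ⊤)
    (p : Submodule ℚ V) :
    Submodule.span ℚ ((Λ.comap p.subtype.toAddMonoidHom : AddSubgroup ↥p) : Set ↥p) = ⊤ := by
  rw [Submodule.eq_top_iff']
  intro x
  obtain ⟨m, hm, hmem⟩ := exists_nsmul_mem Λ hs (x : V)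
  have hmm : ((m : ℚ) • x : ↥p) ∈ (Λ.comap p.subtype.toAddMonoidHom : AddSubgroup ↥p) := by
    simp only [AddSubgroup.mem_comap, LinearMap.toAddMonoidHom_coe, Submodule.coe_subtype]
    simpa using hmem
  have hsp : ((m : ℚ) • x : ↥p) ∈ Submodule.span ℚ
      ((Λ.comap p.subtype.toAddMonoidHom : AddSubgroup ↥p) : Set ↥p) :=
    Submodule.subset_span hmm
  have hmne : (m : ℚ) ≠ 0 := by exact_mod_cast hm.ne'
  have := Submodule.smul_mem _ ((m : ℚ)⁻¹) hsp
  rwa [inv_smul_smul₀ hmne] at this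

private lemma span_map_top {W : Type*} [AddCommGroup W] [Module ℚ W]
    (Λ : AddSubgroup V) (hs : Submodule.span ℚ (Λ : Set V) = ⊤)
    (f : V →ₗ[ℚ] W) (hf : Function.Surjective f) :
    Submodule.span ℚ ((Λ.map f.toAddMonoidHom : AddSubgroup W) : Set W) = ⊤ := by
  have h0 : ((Λ.map f.toAddMonoidHom : AddSubgroup W) : Set W) = f '' Λ := rfl
  rw [h0, Submodule.span_image, hs, Submodule.map_top, LinearMap.range_eq_top.mpr hf]

private lemma relindex_pos_of_lattice (Λ E : AddSubgroup V) (hΛ : Λ.FG)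
    (hE : Submodule.span ℚ (E : Set V) = ⊤) :
    0 < E.relIndex Λ := by
  have hfg : AddGroup.FG ↥Λ := (AddGroup.fg_iff_addSubgroup_fg Λ).mpr hΛ
  have hfgq : AddGroup.FG (↥Λ ⧸ E.addSubgroupOf Λ) :=
    AddGroup.fg_of_surjective (QuotientAddGroup.mk'_surjective _)
  have : Finite (↥Λ ⧸ E.addSubgroupOf Λ) := by
    apply AddCommGroup.finite_of_fg_torsion
    intro x
    induction x using QuotientAddGroup.induction_on with
    | H y =>
      obtain ⟨m, hm, hmem⟩ := exists_nsmul_mem E hE (y : V)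
      rw [isOfFinAddOrder_iff_nsmul_eq_zero]
      refine ⟨m, hm, ?_⟩
      rw [← QuotientAddGroup.mk_nsmul, QuotientAddGroup.eq_zero_iff]
      rw [AddSubgroup.mem_addSubgroupOf]
      rw [Nat.cast_smul_eq_nsmul ℚ] at hmem
      simpa using hmem
  have hpos : 0 < Nat.card (↥Λ ⧸ E.addSubgroupOf Λ) := Nat.card_pos
  rwa [AddSubgroup.relIndex, AddSubgroup.index_eq_card]

end Aux2

section Aux3

private lemma relindex_pi {ι : Type*} [Fintype ι] {G : ι → Type*}
    [∀ i, AddCommGroup (G i)] (Λ E : ∀ i, AddSubgroup (G i)) :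
    (AddSubgroup.pi Set.univ E).relIndex (AddSubgroup.pi Set.univ Λ) =
      ∏ i, (E i).relIndex (Λ i) := by
  classical
  set K := AddSubgroup.pi Set.univ Λ
  let φ : ↥K →+ ∀ i, ↥(Λ i) ⧸ (E i).addSubgroupOf (Λ i) :=
    AddMonoidHom.mk'
      (fun x => fun i => QuotientAddGroup.mk ⟨(x : ∀ i, G i) i, x.2 i (Set.mem_univ i)⟩)
      (by
        intro a b
        funext i
        rfl)
  have hsurj : Function.Surjective φ := by
    intro y
    refine ⟨⟨fun i => ((y i).out : G i), fun i _ => (y i).out.2⟩, ?_⟩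
    funext i
    show QuotientAddGroup.mk ⟨((y i).out : G i), (y i).out.2⟩ = y i
    have h0 : (⟨((y i).out : G i), (y i).out.2⟩ : ↥(Λ i)) = (y i).out := rfl
    rw [h0]
    exact QuotientAddGroup.out_eq' (y i)
  have hker : φ.ker = (AddSubgroup.pi Set.univ E).addSubgroupOf K := by
    ext x
    simp only [AddMonoidHom.mem_ker, AddSubgroup.mem_addSubgroupOf, AddSubgroup.mem_pi,
      Set.mem_univ, forall_true_left]
    rw [funext_iff]
    constructor
    · intro hx i
      have h2 : (QuotientAddGroup.mk (⟨(x : ∀ i, G i) i, x.2 i (Set.mem_univ i)⟩ : ↥(Λ i)) :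
          ↥(Λ i) ⧸ (E i).addSubgroupOf (Λ i)) = 0 := (hx i).trans rfl
      rw [QuotientAddGroup.eq_zero_iff, AddSubgroup.mem_addSubgroupOf] at h2
      exact h2
    · intro hx i
      show (QuotientAddGroup.mk (⟨(x : ∀ i, G i) i, x.2 i (Set.mem_univ i)⟩ : ↥(Λ i)) :
          ↥(Λ i) ⧸ (E i).addSubgroupOf (Λ i)) = 0
      rw [QuotientAddGroup.eq_zero_iff, AddSubgroup.mem_addSubgroupOf]
      exact hx i
  have e := QuotientAddGroup.quotientKerEquivOfSurjective φ hsurj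
  show ((AddSubgroup.pi Set.univ E).addSubgroupOf K).index = _
  rw [← hker, AddSubgroup.index_eq_card, Nat.card_congr e.toEquiv, Nat.card_pi]
  exact Finset.prod_congr rfl fun i _ => by
    rw [AddSubgroup.relIndex, AddSubgroup.index_eq_card]

private lemma sInf_mem_of_cast {S : Set ℕ∞} (hS : S.Nonempty)
    (hcast : ∀ s ∈ S, ∃ k : ℕ, s = (k : ℕ∞)) : sInf S ∈ S := by
  have hT : {k : ℕ | (k : ℕ∞) ∈ S}.Nonempty := by
    obtain ⟨s, hs⟩ := hS
    obtain ⟨k, rfl⟩ := hcast s hs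
    exact ⟨k, hs⟩
  have heq : sInf S = ((sInf {k : ℕ | (k : ℕ∞) ∈ S} : ℕ) : ℕ∞) := by
    apply le_antisymm
    · exact sInf_le (Nat.sInf_mem hT)
    · apply le_sInf
      intro b hb
      obtain ⟨k, rfl⟩ := hcast b hb
      exact_mod_cast Nat.sInf_le (show k ∈ {k : ℕ | (k : ℕ∞) ∈ S} from hb)
  rw [heq]
  exact Nat.sInf_mem hT

end Aux3

section Aux4

private lemma abstract_step {G Q : Type*} [AddCommGroup G] [AddCommGroup Q] (π : G →+ Q)
    (E' Λ' : AddSubgroup G) (hle' : E' ≤ Λ') :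
    E'.relIndex Λ' =
      (E' ⊓ (π.ker ⊓ Λ')).relIndex (π.ker ⊓ Λ') *
        (E'.map π).relIndex (Λ'.map π) := by
  have hmod : E' ⊔ (π.ker ⊓ Λ') = (E' ⊔ π.ker) ⊓ Λ' := by
    apply le_antisymm
    · exact sup_le (le_inf le_sup_left hle')
        (le_inf (inf_le_left.trans le_sup_right) inf_le_right)
    · intro x hx
      have hx1 := (AddSubgroup.mem_inf.mp hx).1
      have hx2 := (AddSubgroup.mem_inf.mp hx).2
      rw [AddSubgroup.mem_sup] at hx1
      obtain ⟨y, hy, z, hz, hyz⟩ := hx1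
      have hzΛ : z ∈ Λ' := by
        have hyΛ : y ∈ Λ' := hle' hy
        have hzeq : z = x - y := by rw [← hyz]; abel
        rw [hzeq]
        exact AddSubgroup.sub_mem _ hx2 hyΛ
      rw [AddSubgroup.mem_sup]
      exact ⟨y, hy, z, AddSubgroup.mem_inf.mpr ⟨hz, hzΛ⟩, hyz⟩
  have h1 : E'.relIndex (E' ⊔ (π.ker ⊓ Λ')) =
      (E' ⊓ (π.ker ⊓ Λ')).relIndex (π.ker ⊓ Λ') := by
    rw [AddSubgroup.relIndex_sup_left, ← AddSubgroup.inf_relIndex_right]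
  have h2 : (E' ⊔ (π.ker ⊓ Λ')).relIndex Λ' =
      (E'.map π).relIndex (Λ'.map π) := by
    rw [hmod, AddSubgroup.inf_relIndex_right, ← AddSubgroup.comap_map_eq,
      AddSubgroup.relIndex_comap]
  rw [← h1, ← h2]
  exact (AddSubgroup.relIndex_mul_relIndex _ _ _ le_sup_left
    (sup_le hle' inf_le_right)).symm

variable {V : Type*} [AddCommGroup V] [Module ℚ V]

private lemma range_subtype_hom (W : Submodule ℚ V) :
    W.subtype.toAddMonoidHom.range = W.toAddSubgroup := by
  ext x
  simp only [AddMonoidHom.mem_range, LinearMap.toAddMonoidHom_coe, Submodule.coe_subtype,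
    Submodule.mem_toAddSubgroup]
  constructor
  · rintro ⟨y, rfl⟩; exact y.2
  · intro hx; exact ⟨⟨x, hx⟩, rfl⟩

private lemma ker_mkQ_hom (W : Submodule ℚ V) (p : Submodule ℚ ↥W) :
    p.mkQ.toAddMonoidHom.ker = p.toAddSubgroup := by
  ext x
  simp only [AddMonoidHom.mem_ker, LinearMap.toAddMonoidHom_coe, Submodule.mem_toAddSubgroup]
  rw [← LinearMap.mem_ker, Submodule.ker_mkQ]

private lemma relindex_comap_subtype (W : Submodule ℚ V) (X Y : AddSubgroup V) (hYX : Y ≤ X) :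
    (Y.comap W.subtype.toAddMonoidHom).relIndex (X.comap W.subtype.toAddMonoidHom) =
      (Y ⊓ W.toAddSubgroup).relIndex (X ⊓ W.toAddSubgroup) := by
  rw [AddSubgroup.relIndex_comap, AddSubgroup.map_comap_eq, range_subtype_hom]
  have e1 : Y ⊓ (W.toAddSubgroup ⊓ X) = Y ⊓ W.toAddSubgroup := by
    apply le_antisymm
    · exact le_inf inf_le_left (inf_le_right.trans inf_le_left)
    · exact le_inf inf_le_left (le_inf inf_le_right (inf_le_left.trans hYX))
  rw [← AddSubgroup.inf_relIndex_right Y (W.toAddSubgroup ⊓ X), e1,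
    inf_comm W.toAddSubgroup X, ← AddSubgroup.inf_relIndex_right (Y ⊓ W.toAddSubgroup)
      (X ⊓ W.toAddSubgroup)]

private lemma step_relindex (P W : Submodule ℚ V) (hPW : P ≤ W)
    (Λ E : AddSubgroup V) (hle : E ≤ Λ) :
    (E ⊓ W.toAddSubgroup).relIndex (Λ ⊓ W.toAddSubgroup) =
      (E ⊓ P.toAddSubgroup).relIndex (Λ ⊓ P.toAddSubgroup) *
      ((E.comap W.subtype.toAddMonoidHom).map (P.comap W.subtype).mkQ.toAddMonoidHom).relIndex
        ((Λ.comap W.subtype.toAddMonoidHom).map (P.comap W.subtype).mkQ.toAddMonoidHom) := by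
  have key := abstract_step (P.comap W.subtype).mkQ.toAddMonoidHom
    (E.comap W.subtype.toAddMonoidHom) (Λ.comap W.subtype.toAddMonoidHom)
    (AddSubgroup.comap_mono hle)
  rw [ker_mkQ_hom] at key
  have e1 : E.comap W.subtype.toAddMonoidHom ⊓
      ((P.comap W.subtype).toAddSubgroup ⊓ Λ.comap W.subtype.toAddMonoidHom) =
      (E ⊓ P.toAddSubgroup).comap W.subtype.toAddMonoidHom := by
    ext x
    simp only [AddSubgroup.mem_inf, AddSubgroup.mem_comap, Submodule.mem_toAddSubgroup,
      Submodule.mem_comap, Submodule.coe_subtype, LinearMap.toAddMonoidHom_coe]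
    exact ⟨fun h => ⟨h.1, h.2.1⟩, fun h => ⟨h.1, h.2, hle h.1⟩⟩
  have e2 : (P.comap W.subtype).toAddSubgroup ⊓ Λ.comap W.subtype.toAddMonoidHom =
      (Λ ⊓ P.toAddSubgroup).comap W.subtype.toAddMonoidHom := by
    ext x
    simp only [AddSubgroup.mem_inf, AddSubgroup.mem_comap, Submodule.mem_toAddSubgroup,
      Submodule.mem_comap, Submodule.coe_subtype, LinearMap.toAddMonoidHom_coe]
    exact ⟨fun h => ⟨h.2, h.1⟩, fun h => ⟨h.2, h.1⟩⟩
  rw [e1, e2, relindex_comap_subtype W _ _ (inf_le_inf_right _ hle),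
    relindex_comap_subtype W Λ E hle] at key
  have e3 : ∀ X : AddSubgroup V, X ⊓ P.toAddSubgroup ⊓ W.toAddSubgroup =
      X ⊓ P.toAddSubgroup := fun X =>
    inf_eq_left.mpr (inf_le_right.trans (fun x hx => hPW hx))
  rw [e3, e3] at key
  exact key

private lemma chain_relindex (n : ℕ) (Vf : Fin (n + 1) → Submodule ℚ V)
    (hV0 : Vf 0 = ⊥) (hVtop : Vf (Fin.last n) = ⊤) (hmono : Monotone Vf)
    (Λ E : AddSubgroup V) (hle : E ≤ Λ) :
    E.relIndex Λ = ∏ i : Fin n,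
      ((E.comap (Vf i.succ).subtype.toAddMonoidHom).map
        ((Vf i.castSucc).comap (Vf i.succ).subtype).mkQ.toAddMonoidHom).relIndex
      ((Λ.comap (Vf i.succ).subtype.toAddMonoidHom).map
        ((Vf i.castSucc).comap (Vf i.succ).subtype).mkQ.toAddMonoidHom) := by
  set c : Fin n → ℕ := fun i =>
    ((E.comap (Vf i.succ).subtype.toAddMonoidHom).map
        ((Vf i.castSucc).comap (Vf i.succ).subtype).mkQ.toAddMonoidHom).relIndex
      ((Λ.comap (Vf i.succ).subtype.toAddMonoidHom).map
        ((Vf i.castSucc).comap (Vf i.succ).subtype).mkQ.toAddMonoidHom) with hc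
  set c' : ℕ → ℕ := fun j => if h : j < n then c ⟨j, h⟩ else 1 with hc'
  have key : ∀ j : ℕ, ∀ hj : j ≤ n,
      (E ⊓ (Vf ⟨j, Nat.lt_succ_of_le hj⟩).toAddSubgroup).relIndex
        (Λ ⊓ (Vf ⟨j, Nat.lt_succ_of_le hj⟩).toAddSubgroup) =
      ∏ i ∈ Finset.range j, c' i := by
    intro j
    induction j with
    | zero =>
      intro hj
      have h0 : (⟨0, Nat.lt_succ_of_le hj⟩ : Fin (n + 1)) = 0 := rfl
      rw [h0, hV0]
      simp only [Finset.range_zero, Finset.prod_empty]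
      rw [Submodule.bot_toAddSubgroup]
      rw [inf_bot_eq, inf_bot_eq]
      exact AddSubgroup.relIndex_self ⊥
    | succ j ih =>
      intro hj
      have hjn : j < n := hj
      have hle2 : Vf ⟨j, by omega⟩ ≤ Vf ⟨j + 1, by omega⟩ := by
        apply hmono
        simp [Fin.mk_le_mk]
      rw [step_relindex (Vf ⟨j, by omega⟩) (Vf ⟨j + 1, Nat.lt_succ_of_le hj⟩) hle2 Λ E hle]
      rw [ih (le_of_lt hjn), Finset.prod_range_succ]
      congr 1
      rw [show c' j = c ⟨j, hjn⟩ from dif_pos hjn]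
      rfl
  have hfin := key n le_rfl
  have hlast : (⟨n, Nat.lt_succ_of_le le_rfl⟩ : Fin (n + 1)) = Fin.last n := rfl
  rw [hlast, hVtop, Submodule.top_toAddSubgroup, inf_top_eq, inf_top_eq] at hfin
  rw [hfin, ← Fin.prod_univ_eq_prod_range c' n]
  apply Finset.prod_congr rfl
  intro i _
  rw [show c' (i : ℕ) = c ⟨i, i.2⟩ from dif_pos i.2]

end Aux4

section Aux5

variable {V : Type*} [AddCommGroup V] [Module ℚ V]

private lemma lattice_quot (W : Submodule ℚ V) (p : Submodule ℚ ↥W) (Λ : AddSubgroup V)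
    (hΛ : IsLatticeIn Λ) :
    IsLatticeIn ((Λ.comap W.subtype.toAddMonoidHom).map p.mkQ.toAddMonoidHom) := by
  constructor
  · exact addsubgroup_fg_map
      (fg_comap_of_injective W.subtype.toAddMonoidHom (fun a b hab => Subtype.ext hab) hΛ.1) _
  · exact span_map_top _ (span_comap_top Λ hΛ.2 W) p.mkQ p.mkQ_surjective

/-- Main transfer lemma: an admissible pair on `V` induces an admissible pair on `W/P`. -/
private lemma quot_mem (P W : Submodule ℚ V)
    (A : Subring (Module.End ℚ V)) (h : Module.End ℚ V)
    (hhW : ∀ x ∈ W, h x ∈ W) (hhP : ∀ x ∈ P, h x ∈ P)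
    (hAW : ∀ a, a ∈ A → ∀ x ∈ W, a x ∈ W) (hAP : ∀ a, a ∈ A → ∀ x ∈ P, a x ∈ P)
    (Λ E : AddSubgroup V) (hLa : IsLatticeIn Λ) (hEa : IsLatticeIn E) (hle : E ≤ Λ)
    (hhE : ∀ x ∈ E, h x ∈ Λ)
    (hAL : ∀ a ∈ A, ∀ x ∈ Λ, a x ∈ Λ) (hAE : ∀ a ∈ A, ∀ x ∈ E, a x ∈ E) :
    ((((E.comap W.subtype.toAddMonoidHom).map
        (P.comap W.subtype).mkQ.toAddMonoidHom).relIndex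
      ((Λ.comap W.subtype.toAddMonoidHom).map
        (P.comap W.subtype).mkQ.toAddMonoidHom) : ℕ) : ℕ∞) ∈
    {m : ℕ∞ | ∃ Λ' E' : AddSubgroup (↥W ⧸ P.comap W.subtype),
      IsLatticeIn Λ' ∧ IsLatticeIn E' ∧ E' ≤ Λ' ∧
      (∀ x ∈ E', inducedEnd P W h hhW hhP x ∈ Λ') ∧
      (∀ a ∈ Subring.closure {T | ∃ a', ∃ ha' : a' ∈ A,
          T = inducedEnd P W a' (hAW a' ha') (hAP a' ha')}, ∀ x ∈ Λ', a x ∈ Λ') ∧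
      (∀ a ∈ Subring.closure {T | ∃ a', ∃ ha' : a' ∈ A,
          T = inducedEnd P W a' (hAW a' ha') (hAP a' ha')}, ∀ x ∈ E', a x ∈ E') ∧
      m = (E'.relIndex Λ' : ℕ∞)} := by
  have hπ : ∀ y : ↥W, (P.comap W.subtype).mkQ.toAddMonoidHom y =
      Submodule.Quotient.mk y := fun y => rfl
  have stab : ∀ (X : AddSubgroup V), (∀ a ∈ A, ∀ x ∈ X, a x ∈ X) →
      ∀ T ∈ Subring.closure {T | ∃ a', ∃ ha' : a' ∈ A,
          T = inducedEnd P W a' (hAW a' ha') (hAP a' ha')},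
      ∀ x ∈ (X.comap W.subtype.toAddMonoidHom).map (P.comap W.subtype).mkQ.toAddMonoidHom,
        T x ∈ (X.comap W.subtype.toAddMonoidHom).map (P.comap W.subtype).mkQ.toAddMonoidHom := by
    intro X hX T hT
    induction hT using Subring.closure_induction with
    | mem T' hT' =>
      obtain ⟨a, ha, rfl⟩ := hT'
      intro x hx
      obtain ⟨y, hy, rfl⟩ := hx
      rw [hπ]
      rw [show inducedEnd P W a (hAW a ha) (hAP a ha) (Submodule.Quotient.mk y) =
        Submodule.Quotient.mk (a.restrict (hAW a ha) y) from Submodule.mapQ_apply _ _ _ _]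
      exact ⟨a.restrict (hAW a ha) y, by
        simpa only [AddSubgroup.mem_comap, LinearMap.toAddMonoidHom_coe, Submodule.coe_subtype,
          LinearMap.restrict_coe_apply, SetLike.mem_coe] using hX a ha _ hy, rfl⟩
    | zero => intro x hx; rw [LinearMap.zero_apply]; exact AddSubgroup.zero_mem _
    | one => intro x hx; rw [Module.End.one_apply]; exact hx
    | add T1 T2 h1 h2 ih1 ih2 =>
      intro x hx
      rw [LinearMap.add_apply]
      exact AddSubgroup.add_mem _ (ih1 x hx) (ih2 x hx)
    | neg T1 h1 ih1 =>
      intro x hx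
      rw [LinearMap.neg_apply]
      exact AddSubgroup.neg_mem _ (ih1 x hx)
    | mul T1 T2 h1 h2 ih1 ih2 =>
      intro x hx
      rw [Module.End.mul_apply]
      exact ih1 _ (ih2 x hx)
  refine ⟨_, _, lattice_quot W _ Λ hLa, lattice_quot W _ E hEa,
    AddSubgroup.map_mono (AddSubgroup.comap_mono hle), ?_, stab Λ hAL, stab E hAE, rfl⟩
  intro x hx
  obtain ⟨y, hy, rfl⟩ := hx
  rw [hπ]
  rw [show inducedEnd P W h hhW hhP (Submodule.Quotient.mk y) =
    Submodule.Quotient.mk (h.restrict hhW y) from Submodule.mapQ_apply _ _ _ _]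
  exact ⟨h.restrict hhW y, by
    simpa only [AddSubgroup.mem_comap, LinearMap.toAddMonoidHom_coe, Submodule.coe_subtype,
      LinearMap.restrict_coe_apply, SetLike.mem_coe] using hhE _ hy, rfl⟩

end Aux5

section Aux6

private lemma pi_lattice {ι : Type*} [Fintype ι] {G : ι → Type*} [∀ i, AddCommGroup (G i)]
    [∀ i, Module ℚ (G i)]
    (Λ : ∀ i, AddSubgroup (G i)) (h : ∀ i, IsLatticeIn (Λ i)) :
    IsLatticeIn (AddSubgroup.pi Set.univ Λ) := by
  classical
  constructor
  · rw [fg_iff_int]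
    have hpi : AddSubgroup.toIntSubmodule (AddSubgroup.pi Set.univ Λ) =
        Submodule.pi Set.univ (fun i => AddSubgroup.toIntSubmodule (Λ i)) := by
      ext x
      rw [Submodule.mem_pi]
      show x ∈ AddSubgroup.pi Set.univ Λ ↔ _
      rw [AddSubgroup.mem_pi]
      exact ⟨fun hx i _ => hx i (Set.mem_univ i), fun hx i _ => hx i (Set.mem_univ i)⟩
    rw [hpi]
    exact Submodule.fg_pi (fun i => (fg_iff_int _).mp (h i).1)
  · rw [Submodule.eq_top_iff']
    intro x
    rw [← Finset.univ_sum_single x]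
    apply Submodule.sum_mem
    intro i _
    have hx : x i ∈ Submodule.span ℚ ((Λ i : Set (G i))) := (h i).2 ▸ Submodule.mem_top
    have h1 : Pi.single i (x i) ∈
        Submodule.map (LinearMap.single ℚ G i) (Submodule.span ℚ ((Λ i : Set (G i)))) :=
      ⟨x i, hx, rfl⟩
    rw [Submodule.map_span] at h1
    refine Submodule.span_mono ?_ h1
    rintro z ⟨y, hy, rfl⟩
    intro j _
    by_cases hji : j = i
    · subst hji; simpa using hy
    · rw [show (LinearMap.single ℚ G i) y j = Pi.single i y j from rfl,
        Pi.single_eq_of_ne hji]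
      exact AddSubgroup.zero_mem _

private lemma comap_lequiv_eq_map_symm {M N : Type*} [AddCommGroup M] [AddCommGroup N]
    [Module ℚ M] [Module ℚ N] (e : M ≃ₗ[ℚ] N) (X : AddSubgroup N) :
    X.comap e.toLinearMap.toAddMonoidHom = X.map e.symm.toLinearMap.toAddMonoidHom := by
  ext x
  simp only [AddSubgroup.mem_comap, AddSubgroup.mem_map, LinearMap.toAddMonoidHom_coe,
    LinearEquiv.coe_coe]
  constructor
  · intro hx; exact ⟨e x, hx, e.symm_apply_apply x⟩
  · rintro ⟨y, hy, rfl⟩; simpa using hy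

private lemma lattice_map_equiv {M N : Type*} [AddCommGroup M] [AddCommGroup N]
    [Module ℚ M] [Module ℚ N] (e : M ≃ₗ[ℚ] N) (X : AddSubgroup M) (hX : IsLatticeIn X) :
    IsLatticeIn (X.map e.toLinearMap.toAddMonoidHom) := by
  constructor
  · exact addsubgroup_fg_map hX.1 _
  · exact span_map_top X hX.2 e.toLinearMap e.surjective

private lemma relindex_comap_surjective {M N : Type*} [AddCommGroup M] [AddCommGroup N]
    (f : M →+ N) (hf : Function.Surjective f) (X Y : AddSubgroup N) :
    (Y.comap f).relIndex (X.comap f) = Y.relIndex X := by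
  rw [AddSubgroup.relIndex_comap, AddSubgroup.map_comap_eq,
    AddMonoidHom.range_eq_top.mpr hf, top_inf_eq]

end Aux6


/-- Let `h ∈ GL(V)`, let `A` be a subring of `End(V)` commuting with
`h`, and let `0 = V_0 ⊆ V_1 ⊆ ⋯ ⊆ V_n = V` be a filtration by `A[h]`-submodules (i.e.
submodules stable under `h` and under `A`).  Let `h_i` be the endomorphism induced by
`h` on `V_i/V_{i-1}`, with the induced `A`-action.  Then
`ht_A(h) ≥ ∏ᵢ ht_A(h_i)`, with equality when `V ≅ ⊕ᵢ V_i/V_{i-1}` as `A[h]`-modules. -/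
theorem latHeightA_ge_prod_quotients
    {V : Type*} [AddCommGroup V] [Module ℚ V] [FiniteDimensional ℚ V]
    (h : V ≃ₗ[ℚ] V) (A : Subring (Module.End ℚ V))
    (hA : ∀ a ∈ A, a * (h : Module.End ℚ V) = (h : Module.End ℚ V) * a)
    (n : ℕ) (Vf : Fin (n + 1) → Submodule ℚ V)
    (hV0 : Vf 0 = ⊥) (hVtop : Vf (Fin.last n) = ⊤) (hmono : Monotone Vf)
    (hstabh : ∀ i, ∀ x ∈ Vf i, h x ∈ Vf i)
    (hstabA : ∀ a, a ∈ A → ∀ i, ∀ x ∈ Vf i, a x ∈ Vf i) :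
    (latHeightA A (h : Module.End ℚ V) ≥
      ∏ i : Fin n,
        latHeightA
          (Subring.closure {T | ∃ a, ∃ ha : a ∈ A,
            T = inducedEnd (Vf i.castSucc) (Vf i.succ) a
                  (hstabA a ha i.succ) (hstabA a ha i.castSucc)})
          (inducedEnd (Vf i.castSucc) (Vf i.succ) (h : Module.End ℚ V)
            (hstabh i.succ) (hstabh i.castSucc))) ∧
    ((∃ e : V ≃ₗ[ℚ]
          (Π i : Fin n, (↥(Vf i.succ) ⧸ ((Vf i.castSucc).comap (Vf i.succ).subtype))),
        (∀ x : V, ∀ i : Fin n,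
          e (h x) i = inducedEnd (Vf i.castSucc) (Vf i.succ) (h : Module.End ℚ V)
            (hstabh i.succ) (hstabh i.castSucc) (e x i)) ∧
        (∀ a, ∀ ha : a ∈ A, ∀ x : V, ∀ i : Fin n,
          e (a x) i = inducedEnd (Vf i.castSucc) (Vf i.succ) a
            (hstabA a ha i.succ) (hstabA a ha i.castSucc) (e x i))) →
      latHeightA A (h : Module.End ℚ V) =
        ∏ i : Fin n,
          latHeightA
            (Subring.closure {T | ∃ a, ∃ ha : a ∈ A,
              T = inducedEnd (Vf i.castSucc) (Vf i.succ) a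
                    (hstabA a ha i.succ) (hstabA a ha i.castSucc)})
            (inducedEnd (Vf i.castSucc) (Vf i.succ) (h : Module.End ℚ V)
              (hstabh i.succ) (hstabh i.castSucc))) := by
  classical
  -- part 1
  have key1 : latHeightA A (h : Module.End ℚ V) ≥
      ∏ i : Fin n,
        latHeightA
          (Subring.closure {T | ∃ a, ∃ ha : a ∈ A,
            T = inducedEnd (Vf i.castSucc) (Vf i.succ) a
                  (hstabA a ha i.succ) (hstabA a ha i.castSucc)})
          (inducedEnd (Vf i.castSucc) (Vf i.succ) (h : Module.End ℚ V)
            (hstabh i.succ) (hstabh i.castSucc)) := by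
    rw [ge_iff_le, latHeightA]
    apply le_sInf
    rintro b ⟨Λ, E, hLa, hEa, hleEL, hhE, hAL, hAE, rfl⟩
    calc
      (∏ i : Fin n,
        latHeightA
          (Subring.closure {T | ∃ a, ∃ ha : a ∈ A,
            T = inducedEnd (Vf i.castSucc) (Vf i.succ) a
                  (hstabA a ha i.succ) (hstabA a ha i.castSucc)})
          (inducedEnd (Vf i.castSucc) (Vf i.succ) (h : Module.End ℚ V)
            (hstabh i.succ) (hstabh i.castSucc))) ≤
      ∏ i : Fin n,
        ((((E.comap (Vf i.succ).subtype.toAddMonoidHom).map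
            ((Vf i.castSucc).comap (Vf i.succ).subtype).mkQ.toAddMonoidHom).relIndex
          ((Λ.comap (Vf i.succ).subtype.toAddMonoidHom).map
            ((Vf i.castSucc).comap (Vf i.succ).subtype).mkQ.toAddMonoidHom) : ℕ) : ℕ∞) := by
        apply Finset.prod_le_prod'
        intro i _
        exact sInf_le (quot_mem (Vf i.castSucc) (Vf i.succ) A (h : Module.End ℚ V)
          (hstabh i.succ) (hstabh i.castSucc)
          (fun a ha => hstabA a ha i.succ) (fun a ha => hstabA a ha i.castSucc)
          Λ E hLa hEa hleEL hhE hAL hAE)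
      _ = ((E.relIndex Λ : ℕ) : ℕ∞) := by
        rw [← Nat.cast_prod, ← chain_relindex n Vf hV0 hVtop hmono Λ E hleEL]
  refine ⟨key1, ?_⟩
  rintro ⟨e, heh, heA⟩
  refine le_antisymm ?_ key1
  by_cases htop : ∃ i : Fin n,
      latHeightA
        (Subring.closure {T | ∃ a, ∃ ha : a ∈ A,
          T = inducedEnd (Vf i.castSucc) (Vf i.succ) a
                (hstabA a ha i.succ) (hstabA a ha i.castSucc)})
        (inducedEnd (Vf i.castSucc) (Vf i.succ) (h : Module.End ℚ V)
          (hstabh i.succ) (hstabh i.castSucc)) = ⊤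
  · obtain ⟨i0, hi0⟩ := htop
    have hub : ∀ j : Fin n, 1 ≤
        latHeightA
          (Subring.closure {T | ∃ a, ∃ ha : a ∈ A,
            T = inducedEnd (Vf j.castSucc) (Vf j.succ) a
                  (hstabA a ha j.succ) (hstabA a ha j.castSucc)})
          (inducedEnd (Vf j.castSucc) (Vf j.succ) (h : Module.End ℚ V)
            (hstabh j.succ) (hstabh j.castSucc)) := by
      intro j
      rw [latHeightA]
      apply le_sInf
      rintro b ⟨Λ', E', hLa', hEa', hle', _, _, _, rfl⟩
      have hpos : 0 < E'.relIndex Λ' := relindex_pos_of_lattice Λ' E' hLa'.1 hEa'.2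
      exact_mod_cast hpos
    have hprod : (∏ i : Fin n,
        latHeightA
          (Subring.closure {T | ∃ a, ∃ ha : a ∈ A,
            T = inducedEnd (Vf i.castSucc) (Vf i.succ) a
                  (hstabA a ha i.succ) (hstabA a ha i.castSucc)})
          (inducedEnd (Vf i.castSucc) (Vf i.succ) (h : Module.End ℚ V)
            (hstabh i.succ) (hstabh i.castSucc))) = ⊤ :=
      top_unique (hi0 ▸ Finset.single_le_prod' (fun j _ => hub j) (Finset.mem_univ i0))
    rw [hprod]
    exact le_top
  · push_neg at htop
    -- each infimum is attained
    have hmemi : ∀ i : Fin n,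
        ∃ Λ' E' : AddSubgroup
            (↥(Vf i.succ) ⧸ ((Vf i.castSucc).comap (Vf i.succ).subtype)),
          IsLatticeIn Λ' ∧ IsLatticeIn E' ∧ E' ≤ Λ' ∧
          (∀ x ∈ E', inducedEnd (Vf i.castSucc) (Vf i.succ) (h : Module.End ℚ V)
            (hstabh i.succ) (hstabh i.castSucc) x ∈ Λ') ∧
          (∀ a ∈ Subring.closure {T | ∃ a', ∃ ha' : a' ∈ A,
              T = inducedEnd (Vf i.castSucc) (Vf i.succ) a'
                    (hstabA a' ha' i.succ) (hstabA a' ha' i.castSucc)},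
            ∀ x ∈ Λ', a x ∈ Λ') ∧
          (∀ a ∈ Subring.closure {T | ∃ a', ∃ ha' : a' ∈ A,
              T = inducedEnd (Vf i.castSucc) (Vf i.succ) a'
                    (hstabA a' ha' i.succ) (hstabA a' ha' i.castSucc)},
            ∀ x ∈ E', a x ∈ E') ∧
          (latHeightA
            (Subring.closure {T | ∃ a, ∃ ha : a ∈ A,
              T = inducedEnd (Vf i.castSucc) (Vf i.succ) a
                    (hstabA a ha i.succ) (hstabA a ha i.castSucc)})
            (inducedEnd (Vf i.castSucc) (Vf i.succ) (h : Module.End ℚ V)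
              (hstabh i.succ) (hstabh i.castSucc))) = (E'.relIndex Λ' : ℕ∞) := by
      intro i
      have hne : {m : ℕ∞ | ∃ Λ' E' : AddSubgroup
            (↥(Vf i.succ) ⧸ ((Vf i.castSucc).comap (Vf i.succ).subtype)),
          IsLatticeIn Λ' ∧ IsLatticeIn E' ∧ E' ≤ Λ' ∧
          (∀ x ∈ E', inducedEnd (Vf i.castSucc) (Vf i.succ) (h : Module.End ℚ V)
            (hstabh i.succ) (hstabh i.castSucc) x ∈ Λ') ∧
          (∀ a ∈ Subring.closure {T | ∃ a', ∃ ha' : a' ∈ A,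
              T = inducedEnd (Vf i.castSucc) (Vf i.succ) a'
                    (hstabA a' ha' i.succ) (hstabA a' ha' i.castSucc)},
            ∀ x ∈ Λ', a x ∈ Λ') ∧
          (∀ a ∈ Subring.closure {T | ∃ a', ∃ ha' : a' ∈ A,
              T = inducedEnd (Vf i.castSucc) (Vf i.succ) a'
                    (hstabA a' ha' i.succ) (hstabA a' ha' i.castSucc)},
            ∀ x ∈ E', a x ∈ E') ∧
          m = (E'.relIndex Λ' : ℕ∞)}.Nonempty := by
        by_contra hcon
        rw [Set.not_nonempty_iff_eq_empty] at hcon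
        apply htop i
        rw [latHeightA]
        rw [show {m : ℕ∞ | _} = _ from hcon]
        exact sInf_empty
      have hmem := sInf_mem_of_cast hne (by
        rintro s ⟨Λ', E', _, _, _, _, _, _, rfl⟩
        exact ⟨E'.relIndex Λ', rfl⟩)
      obtain ⟨Λ', E', h1, h2, h3, h4, h5, h6, h7⟩ := hmem
      exact ⟨Λ', E', h1, h2, h3, h4, h5, h6, h7⟩
    choose Λi Ei hLa hEa hlei hhi hALi hAEi hval using hmemi
    -- build the global pair
    set f := e.toLinearMap.toAddMonoidHom with hf
    have hfsurj : Function.Surjective f := e.surjective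
    have hmemc : ∀ (X : ∀ i : Fin n, AddSubgroup
        (↥(Vf i.succ) ⧸ ((Vf i.castSucc).comap (Vf i.succ).subtype))) (x : V),
        x ∈ (AddSubgroup.pi Set.univ X).comap f ↔ ∀ i, e x i ∈ X i := by
      intro X x
      rw [AddSubgroup.mem_comap]
      exact ⟨fun hx i => hx i (Set.mem_univ i), fun hx i _ => hx i⟩
    have hlatg : ∀ (X : ∀ i : Fin n, AddSubgroup
        (↥(Vf i.succ) ⧸ ((Vf i.castSucc).comap (Vf i.succ).subtype))),
        (∀ i, IsLatticeIn (X i)) → IsLatticeIn ((AddSubgroup.pi Set.univ X).comap f) := by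
      intro X hX
      rw [hf, comap_lequiv_eq_map_symm]
      exact lattice_map_equiv e.symm _ (pi_lattice X hX)
    apply sInf_le
    refine ⟨(AddSubgroup.pi Set.univ Λi).comap f, (AddSubgroup.pi Set.univ Ei).comap f,
      hlatg Λi hLa, hlatg Ei hEa,
      AddSubgroup.comap_mono (fun x hx i hi => hlei i (hx i hi)), ?_, ?_, ?_, ?_⟩
    · intro x hx
      rw [hmemc] at hx ⊢
      intro i
      have h9 : e ((h : Module.End ℚ V) x) i =
          inducedEnd (Vf i.castSucc) (Vf i.succ) (h : Module.End ℚ V)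
            (hstabh i.succ) (hstabh i.castSucc) (e x i) := heh x i
      rw [h9]
      exact hhi i _ (hx i)
    · intro a ha x hx
      rw [hmemc] at hx ⊢
      intro i
      rw [heA a ha x i]
      exact hALi i _ (Subring.subset_closure ⟨a, ha, rfl⟩) _ (hx i)
    · intro a ha x hx
      rw [hmemc] at hx ⊢
      intro i
      rw [heA a ha x i]
      exact hAEi i _ (Subring.subset_closure ⟨a, ha, rfl⟩) _ (hx i)
    · -- value
      rw [relindex_comap_surjective f hfsurj, relindex_pi]
      rw [Nat.cast_prod]
      apply Finset.prod_congr rfl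
      intro i _
      exact hval i
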